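/- For every k ∈ ℕ the following limits hold as r → ∞: A^0_k(r)/log^k(r) → 1, A^0_k(r)/B^0(r) → 0, A^1_0(r)/A^0_k(r) → 0, and A^1_k(r)/log^k(A^1_0(r)) → 1. -/

import Mathlib

open Real MeasureTheory Filter Topology Set

noncomputable def Fa (a : ℝ) : ℝ → ℝ := fun u => a - Real.log a + Real.log u
noncomputable def Ftilde (a : ℝ) (u : ℝ) : ℝ := a * ∏' k : ℕ, ((Fa a)^[k] u / a)
noncomputable def Sa (a : ℝ) (u : ℝ) : ℝ := ∑' k : ℕ, Real.log ((Fa a)^[k] u / a)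

section basic
variable {a : ℝ} (ha : 1 < a)
include ha

lemma ha0 : (0:ℝ) < a := lt_trans one_pos ha

omit ha in
lemma Fa_fixed : Fa a a = a := by simp [Fa]

lemma Fa_ge {u : ℝ} (hu : a ≤ u) : a ≤ Fa a u := by
  have : Real.log a ≤ Real.log u := Real.log_le_log (ha0 ha) hu
  simp [Fa]; linarith

lemma iter_ge (k : ℕ) {u : ℝ} (hu : a ≤ u) : a ≤ (Fa a)^[k] u := by
  induction k with
  | zero => simpa
  | succ n ih => rw [Function.iterate_succ_apply']; exact Fa_ge ha ih

lemma iter_pos (k : ℕ) {u : ℝ} (hu : a ≤ u) : 0 < (Fa a)^[k] u :=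
  lt_of_lt_of_le (ha0 ha) (iter_ge ha k hu)

lemma Fa_sub_le {u : ℝ} (hu : a ≤ u) : Fa a u - a ≤ (u - a) / a := by
  have h0 : (0:ℝ) < a := ha0 ha
  have hpos : 0 < u / a := div_pos (lt_of_lt_of_le h0 hu) h0
  have := Real.log_le_sub_one_of_pos hpos
  have hlog : Fa a u - a = Real.log (u / a) := by
    rw [Real.log_div (by linarith : u ≠ 0) (ne_of_gt h0)]; simp [Fa]; ring
  rw [hlog]
  calc Real.log (u/a) ≤ u/a - 1 := this
    _ = (u - a)/a := by field_simp

lemma iter_sub_le (k : ℕ) {u : ℝ} (hu : a ≤ u) : (Fa a)^[k] u - a ≤ (u - a) / a ^ k := by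
  induction k with
  | zero => simp
  | succ n ih =>
    rw [Function.iterate_succ_apply']
    have h1 := Fa_sub_le ha (iter_ge ha n hu)
    have h0 : (0:ℝ) < a := ha0 ha
    calc Fa a ((Fa a)^[n] u) - a ≤ ((Fa a)^[n] u - a) / a := h1
      _ ≤ ((u - a) / a ^ n) / a := by gcongr
      _ = (u - a) / a ^ (n+1) := by rw [pow_succ]; ring

lemma log_term_nonneg (k : ℕ) {u : ℝ} (hu : a ≤ u) :
    0 ≤ Real.log ((Fa a)^[k] u / a) :=
  Real.log_nonneg ((one_le_div (ha0 ha)).2 (iter_ge ha k hu))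

lemma log_term_le (k : ℕ) {u : ℝ} (hu : a ≤ u) :
    Real.log ((Fa a)^[k] u / a) ≤ (u - a) / a ^ (k+1) := by
  have h0 : (0:ℝ) < a := ha0 ha
  have h1 : Real.log ((Fa a)^[k] u / a) ≤ (Fa a)^[k] u / a - 1 :=
    Real.log_le_sub_one_of_pos (div_pos (iter_pos ha k hu) h0)
  have h2 : (Fa a)^[k] u / a - 1 = ((Fa a)^[k] u - a) / a := by field_simp
  have h3 := iter_sub_le ha k hu
  rw [pow_succ]
  calc Real.log ((Fa a)^[k] u / a) ≤ ((Fa a)^[k] u - a)/a := by rw [← h2]; exact h1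
    _ ≤ ((u - a)/a^k)/a := by gcongr
    _ = (u-a)/(a^k * a) := by ring

omit ha in
lemma geom_shape (h0 : (0:ℝ) < a) (u : ℝ) :
    (fun k : ℕ => (u - a)/a^(k+1)) = fun k : ℕ => ((u-a)/a) * (1/a)^k := by
  funext k
  rw [pow_succ, one_div, inv_pow]
  field_simp

lemma summable_logs {u : ℝ} (hu : a ≤ u) :
    Summable (fun k : ℕ => Real.log ((Fa a)^[k] u / a)) := by
  have h0 : (0:ℝ) < a := ha0 ha
  apply Summable.of_nonneg_of_le (fun k => log_term_nonneg ha k hu)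
    (fun k => log_term_le ha k hu)
  rw [geom_shape h0]
  exact (summable_geometric_of_lt_one (by positivity) (by rw [div_lt_one h0]; linarith)).mul_left _

lemma hasProd_exp_Sa {u : ℝ} (hu : a ≤ u) :
    HasProd (fun k : ℕ => (Fa a)^[k] u / a) (Real.exp (Sa a u)) := by
  have h := ((summable_logs ha hu).hasSum).rexp
  have : (rexp ∘ fun k : ℕ => Real.log ((Fa a)^[k] u / a)) = fun k : ℕ => (Fa a)^[k] u / a := by
    funext k
    exact Real.exp_log (div_pos (iter_pos ha k hu) (ha0 ha))
  rwa [this] at h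

lemma Ftilde_eq {u : ℝ} (hu : a ≤ u) : Ftilde a u = a * Real.exp (Sa a u) := by
  rw [Ftilde, (hasProd_exp_Sa ha hu).tprod_eq]

lemma Sa_nonneg {u : ℝ} (hu : a ≤ u) : 0 ≤ Sa a u :=
  tsum_nonneg (fun k => log_term_nonneg ha k hu)

lemma Sa_le {u : ℝ} (hu : a ≤ u) : Sa a u ≤ (u - a) / (a - 1) := by
  have h0 : (0:ℝ) < a := ha0 ha
  have hsum : Summable (fun k : ℕ => (u - a)/a^(k+1)) := by
    rw [geom_shape h0]
    exact (summable_geometric_of_lt_one (by positivity) (by rw [div_lt_one h0]; linarith)).mul_left _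
  have h1 : Sa a u ≤ ∑' k : ℕ, (u - a)/a^(k+1) :=
    Summable.tsum_le_tsum (fun k => log_term_le ha k hu) (summable_logs ha hu) hsum
  have h2 : ∑' k : ℕ, (u - a)/a^(k+1) = (u - a)/(a-1) := by
    rw [geom_shape h0, tsum_mul_left, tsum_geometric_of_lt_one (by positivity) (by rw [div_lt_one h0]; linarith)]
    rw [one_div]
    rw [show (1 - a⁻¹) = (a-1)/a by field_simp]
    rw [inv_div]
    field_simp
  linarith

lemma Ftilde_ge {u : ℝ} (hu : a ≤ u) : a ≤ Ftilde a u := by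
  rw [Ftilde_eq ha hu]
  nlinarith [Real.one_le_exp (Sa_nonneg ha hu), ha0 ha]

lemma Ftilde_pos {u : ℝ} (hu : a ≤ u) : 0 < Ftilde a u :=
  lt_of_lt_of_le (ha0 ha) (Ftilde_ge ha hu)

lemma Ftilde_le {u : ℝ} (hu : a ≤ u) : Ftilde a u ≤ a * Real.exp ((u - a)/(a-1)) := by
  rw [Ftilde_eq ha hu]
  exact mul_le_mul_of_nonneg_left (Real.exp_le_exp.2 (Sa_le ha hu)) (ha0 ha).le

lemma prod_le_exp_Sa {u : ℝ} (hu : a ≤ u) (s : Finset ℕ) :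
    ∏ k ∈ s, ((Fa a)^[k] u / a) ≤ Real.exp (Sa a u) := by
  have h1 : ∑ k ∈ s, Real.log ((Fa a)^[k] u / a) ≤ Sa a u :=
    Summable.sum_le_tsum s (fun k _ => log_term_nonneg ha k hu) (summable_logs ha hu)
  calc ∏ k ∈ s, ((Fa a)^[k] u / a)
      = Real.exp (∑ k ∈ s, Real.log ((Fa a)^[k] u / a)) := by
        rw [Real.exp_sum]
        exact Finset.prod_congr rfl fun k _ =>
          (Real.exp_log (div_pos (iter_pos ha k hu) (ha0 ha))).symm
    _ ≤ Real.exp (Sa a u) := Real.exp_le_exp.2 h1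

end basic
section part2
variable {a : ℝ} (ha : 1 < a)
include ha

omit ha in
lemma Fa_mono {u v : ℝ} (hu : 0 < u) (huv : u ≤ v) : Fa a u ≤ Fa a v := by
  simp only [Fa]
  have := Real.log_le_log hu huv
  linarith

lemma iter_mono (k : ℕ) {u v : ℝ} (hu : a ≤ u) (huv : u ≤ v) :
    (Fa a)^[k] u ≤ (Fa a)^[k] v := by
  induction k with
  | zero => simpa
  | succ n ih =>
    rw [Function.iterate_succ_apply', Function.iterate_succ_apply']
    exact Fa_mono (iter_pos ha n hu) ih

lemma Sa_mono {u v : ℝ} (hu : a ≤ u) (huv : u ≤ v) : Sa a u ≤ Sa a v := by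
  refine Summable.tsum_le_tsum (fun k => ?_) (summable_logs ha hu) (summable_logs ha (le_trans hu huv))
  have h0 := ha0 ha
  refine Real.log_le_log (div_pos (iter_pos ha k hu) h0) ?_
  gcongr
  exact iter_mono ha k hu huv

lemma iter_clamp_continuous (M : ℝ) (k : ℕ) :
    Continuous (fun u : ℝ => (Fa a)^[k] (max a (min u M))) := by
  have hcl : Continuous (fun u : ℝ => max a (min u M)) :=
    continuous_const.max (continuous_id.min continuous_const)
  induction k with
  | zero => simpa
  | succ n ih =>
    have hpos : ∀ u : ℝ, (Fa a)^[n] (max a (min u M)) ≠ 0 :=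
      fun u => ne_of_gt (iter_pos ha n (le_max_left _ _))
    simp only [Function.iterate_succ_apply', Fa]
    exact continuous_const.add (ih.log hpos)

lemma Sa_contOn : ContinuousOn (Sa a) (Ici a) := by
  intro x hx
  set M := x + 1 with hM
  have hxM : a ≤ M := le_trans hx (by linarith)
  set g : ℝ → ℝ := fun u => ∑' k : ℕ, Real.log ((Fa a)^[k] (max a (min u M)) / a) with hg
  have hgc : Continuous g := by
    apply continuous_tsum
      (f := fun (k : ℕ) (u : ℝ) => Real.log ((Fa a)^[k] (max a (min u M)) / a))
      (u := fun k : ℕ => (M - a) / a ^ (k+1))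
    · intro k
      have h0 : (0:ℝ) < a := ha0 ha
      exact ((iter_clamp_continuous ha M k).div_const a).log
        (fun u => ne_of_gt (div_pos (iter_pos ha k (le_max_left _ _)) h0))
    · rw [geom_shape (ha0 ha)]
      exact (summable_geometric_of_lt_one (by positivity)
        (by rw [div_lt_one (ha0 ha)]; linarith)).mul_left _
    · intro k u
      have hcu : a ≤ max a (min u M) := le_max_left _ _
      have hcM : max a (min u M) ≤ M := max_le hxM (min_le_right _ _)
      rw [Real.norm_eq_abs, abs_of_nonneg (log_term_nonneg ha k hcu)]
      calc Real.log ((Fa a)^[k] (max a (min u M)) / a) ≤ (max a (min u M) - a) / a^(k+1) :=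
            log_term_le ha k hcu
        _ ≤ (M - a)/a^(k+1) := by gcongr
  have heq : ∀ u ∈ Ici a ∩ Iic M, Sa a u = g u := by
    intro u hu
    have : max a (min u M) = u := by
      rw [min_eq_left hu.2, max_eq_right hu.1]
    simp only [hg, Sa, this]
  refine (hgc.continuousAt.continuousWithinAt).congr_of_eventuallyEq ?_ (heq x ⟨hx, by simp only [mem_Iic, hM]; linarith⟩)
  have hmem : Ici a ∩ Iic M ∈ 𝓝[Ici a] x :=
    Filter.inter_mem self_mem_nhdsWithin
      (mem_nhdsWithin_of_mem_nhds (Iic_mem_nhds (by linarith)))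
  exact Filter.eventuallyEq_of_mem hmem heq

lemma Ftilde_contOn : ContinuousOn (Ftilde a) (Ici a) := by
  have h : ContinuousOn (fun u => a * Real.exp (Sa a u)) (Ici a) :=
    (Real.continuous_exp.comp_continuousOn (Sa_contOn ha)).const_smul a
  exact h.congr (fun u hu => Ftilde_eq ha hu)

lemma Sa_shift {u : ℝ} (hu : a ≤ u) : Sa a (Fa a u) = Sa a u - Real.log (u / a) := by
  have h1 : Sa a u = Real.log (u/a) + ∑' k : ℕ, Real.log ((Fa a)^[k+1] u / a) := by
    rw [Sa, Summable.tsum_eq_zero_add (summable_logs ha hu)]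
    simp
  have h2 : ∀ k : ℕ, (Fa a)^[k+1] u = (Fa a)^[k] (Fa a u) := fun k =>
    Function.iterate_succ_apply (Fa a) k u
  rw [Sa]
  simp_rw [← h2]
  linarith [h1]

lemma Ftilde_shift {u : ℝ} (hu : a ≤ u) : Ftilde a (Fa a u) = (a / u) * Ftilde a u := by
  have h0 := ha0 ha
  have hupos : 0 < u := lt_of_lt_of_le h0 hu
  rw [Ftilde_eq ha (Fa_ge ha hu), Ftilde_eq ha hu, Sa_shift ha hu, Real.exp_sub,
    Real.exp_log (div_pos hupos h0)]
  field_simp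

end part2
noncomputable def phiFun (a : ℝ) (u : ℝ) : ℝ := a + ∫ t in a..u, 1 / Ftilde a t

noncomputable def useq (a : ℝ) : ℕ → ℝ
  | 0 => a + 1
  | n+1 => a * Real.exp (useq a n - a)

section part3
variable {a : ℝ} (ha : 1 < a)
include ha

lemma integrand_contOn : ContinuousOn (fun t => 1 / Ftilde a t) (Ici a) :=
  continuousOn_const.div (Ftilde_contOn ha) (fun t ht => ne_of_gt (Ftilde_pos ha ht))

lemma integrand_intble {u v : ℝ} (hu : a ≤ u) (hv : a ≤ v) :
    IntervalIntegrable (fun t => 1 / Ftilde a t) volume u v :=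
  ((integrand_contOn ha).mono (fun t ht => le_trans (le_min hu hv) ht.1)).intervalIntegrable

lemma phi_mono {u v : ℝ} (hu : a ≤ u) (huv : u ≤ v) : phiFun a u ≤ phiFun a v := by
  have hv : a ≤ v := le_trans hu huv
  have hsplit := intervalIntegral.integral_add_adjacent_intervals
    (integrand_intble ha le_rfl hu) (integrand_intble ha hu hv)
  have hnn : 0 ≤ ∫ t in u..v, 1 / Ftilde a t := by
    apply intervalIntegral.integral_nonneg huv
    intro t ht
    exact le_of_lt (div_pos one_pos (Ftilde_pos ha (le_trans hu ht.1)))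
  simp only [phiFun]
  linarith [hsplit]

lemma phi_c_pos : 0 < phiFun a (a + 1) - a := by
  have h0 := ha0 ha
  set m : ℝ := Real.exp (-(1/(a-1))) / a with hm
  have hmpos : 0 < m := by positivity
  have hint : m ≤ ∫ t in a..(a+1), 1 / Ftilde a t := by
    have h1 : ∫ t in a..(a+1), m = m := by
      rw [intervalIntegral.integral_const]; simp
    rw [← h1]
    apply intervalIntegral.integral_mono_on (by linarith)
      (intervalIntegrable_const) (integrand_intble ha le_rfl (by linarith))
    intro t ht
    have hta : a ≤ t := ht.1
    have htM : t ≤ a + 1 := ht.2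
    have hFle : Ftilde a t ≤ a * Real.exp (1/(a-1)) := by
      refine le_trans (Ftilde_le ha hta) ?_
      have harg : (t-a)/(a-1) ≤ 1/(a-1) := by gcongr <;> linarith
      exact mul_le_mul_of_nonneg_left (Real.exp_le_exp.2 harg) h0.le
    have hFpos : 0 < Ftilde a t := Ftilde_pos ha hta
    rw [hm, div_le_div_iff₀ (by positivity) hFpos]
    calc Real.exp (-(1/(a-1))) * Ftilde a t
        ≤ Real.exp (-(1/(a-1))) * (a * Real.exp (1/(a-1))) := by gcongr
      _ = 1 * a := by
          rw [Real.exp_neg]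
          field_simp
  simp only [phiFun]
  linarith

lemma phi_shift {u : ℝ} (hu : a ≤ u) :
    phiFun a u - a = a * (phiFun a (Fa a u) - a) := by
  have h0 := ha0 ha
  have hcov : (∫ x in a..u, (fun x => x⁻¹) x • ((fun s => 1 / Ftilde a s) ∘ Fa a) x)
      = ∫ s in (Fa a a)..(Fa a u), 1 / Ftilde a s := by
    apply intervalIntegral.integral_comp_smul_deriv'
    · intro x hx
      rw [Set.uIcc_of_le hu] at hx
      have hxa : a ≤ x := hx.1
      have : HasDerivAt Real.log x⁻¹ x := Real.hasDerivAt_log (by linarith : x ≠ 0)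
      exact this.const_add (a - Real.log a)
    · refine ContinuousOn.inv₀ continuousOn_id ?_
      intro x hx
      rw [Set.uIcc_of_le hu] at hx
      exact ne_of_gt (lt_of_lt_of_le h0 hx.1)
    · apply (integrand_contOn ha).mono
      intro s hs
      obtain ⟨x, hx, rfl⟩ := hs
      rw [Set.uIcc_of_le hu] at hx
      exact Fa_ge ha hx.1
  have hptw : ∀ x ∈ Set.uIcc a u,
      (fun x => x⁻¹) x • ((fun s => 1 / Ftilde a s) ∘ Fa a) x = (1/a) * (1 / Ftilde a x) := by
    intro x hx
    rw [Set.uIcc_of_le hu] at hx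
    have hxa : a ≤ x := hx.1
    have hxpos : 0 < x := lt_of_lt_of_le h0 hxa
    have := Ftilde_shift ha hxa
    simp only [Function.comp, smul_eq_mul, this]
    have hFpos : 0 < Ftilde a x := Ftilde_pos ha hxa
    have h1 : x ≠ 0 := hxpos.ne'
    have h2 : a ≠ 0 := h0.ne'
    have h3 : Ftilde a x ≠ 0 := hFpos.ne'
    field_simp
  have hcongr : (∫ x in a..u, (fun x => x⁻¹) x • ((fun s => 1 / Ftilde a s) ∘ Fa a) x)
      = ∫ x in a..u, (1/a) * (1 / Ftilde a x) :=
    intervalIntegral.integral_congr hptw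
  have hmul : ∫ x in a..u, (1/a) * (1 / Ftilde a x) = (1/a) * ∫ x in a..u, 1 / Ftilde a x := by
    rw [intervalIntegral.integral_const_mul]
  rw [Fa_fixed] at hcov
  simp only [phiFun]
  have : ∫ s in a..(Fa a u), 1 / Ftilde a s = (1/a) * ∫ x in a..u, 1 / Ftilde a x := by
    rw [← hcov, hcongr, hmul]
  rw [this]
  field_simp
  ring

lemma useq_ge (n : ℕ) : a + a ^ n ≤ useq a n := by
  induction n with
  | zero => simp [useq]
  | succ m ih =>
    have h0 := ha0 ha
    have h1 : (0:ℝ) < a ^ m := by positivity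
    have h2 : a ^ m ≤ useq a m - a := by linarith
    have h3 : useq a m - a + 1 ≤ Real.exp (useq a m - a) := by
      linarith [Real.add_one_le_exp (useq a m - a)]
    calc a + a^(m+1) = a + a * a^m := by rw [pow_succ]; ring
      _ ≤ a + a * (useq a m - a) := by gcongr
      _ ≤ a * Real.exp (useq a m - a) := by nlinarith
      _ = useq a (m+1) := rfl

lemma useq_ge_a (n : ℕ) : a ≤ useq a n := by
  have := useq_ge ha n
  have : (0:ℝ) < a ^ n := by positivity
  linarith [useq_ge ha n]

lemma Fa_useq (n : ℕ) : Fa a (useq a (n+1)) = useq a n := by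
  have h0 := ha0 ha
  show Fa a (a * Real.exp (useq a n - a)) = useq a n
  rw [Fa, Real.log_mul (ne_of_gt h0) (ne_of_gt (Real.exp_pos _)), Real.log_exp]
  ring

lemma phi_useq (n : ℕ) : phiFun a (useq a n) - a = a ^ n * (phiFun a (a+1) - a) := by
  induction n with
  | zero => simp [useq]
  | succ m ih =>
    have := phi_shift ha (useq_ge_a ha (m+1))
    rw [Fa_useq ha m] at this
    rw [this, ih, pow_succ]
    ring

lemma phi_tendsto : Tendsto (phiFun a) atTop atTop := by
  rw [tendsto_atTop]
  intro b
  have hc := phi_c_pos ha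
  have hpow : Tendsto (fun n : ℕ => a ^ n * (phiFun a (a+1) - a)) atTop atTop :=
    (tendsto_pow_atTop_atTop_of_one_lt ha).atTop_mul_const hc
  obtain ⟨n, hn⟩ := (hpow.eventually_ge_atTop (b - a)).exists
  filter_upwards [eventually_ge_atTop (useq a n)] with u hu
  have h1 : phiFun a (useq a n) ≤ phiFun a u := phi_mono ha (useq_ge_a ha n) hu
  have h2 := phi_useq ha n
  linarith

end part3
section part4
variable {a : ℝ} (ha : 1 < a)

omit ha in
lemma tendsto_iter_log_atTop (k : ℕ) : Tendsto (Real.log^[k]) atTop atTop := by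
  induction k with
  | zero => simpa using tendsto_id
  | succ n ih =>
    rw [Function.iterate_succ']
    exact Real.tendsto_log_atTop.comp ih

include ha in
lemma step_lemma {f h : ℝ → ℝ} {c : ℝ} (hc : 0 < c)
    (hfh : Tendsto (fun r => f r / h r) atTop (𝓝 c)) (hh : Tendsto h atTop atTop) :
    Tendsto (fun r => Fa a (f r) / Real.log (h r)) atTop (𝓝 1) := by
  have hlogh : Tendsto (fun r => Real.log (h r)) atTop atTop :=
    Real.tendsto_log_atTop.comp hh
  have hnum : Tendsto (fun r => a - Real.log a + Real.log (f r / h r)) atTop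
      (𝓝 (a - Real.log a + Real.log c)) :=
    tendsto_const_nhds.add (hfh.log hc.ne')
  have hq : Tendsto (fun r => (a - Real.log a + Real.log (f r / h r)) / Real.log (h r))
      atTop (𝓝 0) := hnum.div_atTop hlogh
  have hfin : Tendsto (fun r => 1 + (a - Real.log a + Real.log (f r / h r)) / Real.log (h r))
      atTop (𝓝 1) := by
    have := (tendsto_const_nhds (x := (1:ℝ)) (f := atTop)).add hq
    simpa using this
  refine hfin.congr' ?_
  have hfpos : ∀ᶠ r in atTop, 0 < f r := by
    have hfT : Tendsto f atTop atTop := by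
      have := hfh.pos_mul_atTop hc hh
      refine this.congr' ?_
      filter_upwards [hh.eventually_gt_atTop 0] with r hr
      field_simp
    exact hfT.eventually_gt_atTop 0
  filter_upwards [hfpos, hh.eventually_gt_atTop 1, hlogh.eventually_gt_atTop 0] with r hf1 hh1 hl1
  have hhpos : (0:ℝ) < h r := lt_trans one_pos hh1
  have hlog : Real.log (f r) = Real.log (f r / h r) + Real.log (h r) := by
    rw [← Real.log_mul (by positivity) hhpos.ne']
    congr 1
    field_simp
  rw [eq_comm]
  show Fa a (f r) / Real.log (h r) = _
  rw [Fa, hlog]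
  field_simp
  ring

include ha in
lemma L2 (k : ℕ) (hk : 1 ≤ k) :
    Tendsto (fun v : ℝ => (Fa a)^[k] v / Real.log^[k] v) atTop (𝓝 1) := by
  induction k, hk using Nat.le_induction with
  | base =>
    have h1 : Tendsto (fun v : ℝ => v / v) atTop (𝓝 1) := by
      refine tendsto_const_nhds.congr' ?_
      filter_upwards [eventually_gt_atTop (0:ℝ)] with v hv
      rw [div_self hv.ne']
    simpa using step_lemma ha one_pos h1 tendsto_id
  | succ n hn ih =>
    have := step_lemma ha one_pos ih (tendsto_iter_log_atTop n)
    refine this.congr (fun v => ?_)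
    rw [Function.iterate_succ_apply' (Fa a), Function.iterate_succ_apply' Real.log]

include ha in
lemma L1 (k : ℕ) (hk : 1 ≤ k) :
    Tendsto (fun r : ℝ => (Fa a)^[k] (a * r) / Real.log^[k] r) atTop (𝓝 1) := by
  induction k, hk using Nat.le_induction with
  | base =>
    have h1 : Tendsto (fun r : ℝ => (a * r) / r) atTop (𝓝 a) := by
      refine tendsto_const_nhds.congr' ?_
      filter_upwards [eventually_gt_atTop (0:ℝ)] with r hr
      rw [mul_div_assoc, div_self hr.ne', mul_one]
    simpa using step_lemma ha (ha0 ha) h1 tendsto_id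
  | succ n hn ih =>
    have := step_lemma ha one_pos ih (tendsto_iter_log_atTop n)
    refine this.congr (fun r => ?_)
    rw [Function.iterate_succ_apply' (Fa a), Function.iterate_succ_apply' Real.log]

include ha in
lemma L1_atTop (k : ℕ) (hk : 1 ≤ k) :
    Tendsto (fun r : ℝ => (Fa a)^[k] (a * r)) atTop atTop := by
  have := (L1 ha k hk).pos_mul_atTop one_pos (tendsto_iter_log_atTop k)
  refine this.congr' ?_
  filter_upwards [(tendsto_iter_log_atTop k).eventually_gt_atTop 0] with r hr
  field_simp

end part4
section part5
variable {a : ℝ} (ha : 1 < a)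
include ha

omit ha in
lemma iter_fixed (n : ℕ) : (Fa a)^[n] a = a := by
  induction n with
  | zero => simp
  | succ m ih => rw [Function.iterate_succ_apply', ih, Fa_fixed]

lemma hasDerivAt_iter (n : ℕ) {t : ℝ} (ht : a ≤ t) :
    HasDerivAt ((Fa a)^[n]) (∏ j ∈ Finset.range n, ((Fa a)^[j] t)⁻¹) t := by
  induction n with
  | zero => simpa using hasDerivAt_id t
  | succ m ih =>
    have hpos : 0 < (Fa a)^[m] t := iter_pos ha m ht
    have hF : HasDerivAt (Fa a) (((Fa a)^[m] t)⁻¹) ((Fa a)^[m] t) := by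
      have := Real.hasDerivAt_log hpos.ne'
      exact this.const_add (a - Real.log a)
    have hcomp := hF.comp t ih
    have : (Fa a) ∘ ((Fa a)^[m]) = (Fa a)^[m+1] := by
      funext x; rw [Function.iterate_succ_apply']; rfl
    rw [this] at hcomp
    refine hcomp.congr_deriv ?_
    rw [Finset.prod_range_succ]
    ring

lemma iter_contOn (n : ℕ) : ContinuousOn ((Fa a)^[n]) (Ici a) :=
  fun t ht => ((hasDerivAt_iter ha n ht).continuousAt).continuousWithinAt

lemma iter_deriv_contOn (n : ℕ) :
    ContinuousOn (fun t => ∏ j ∈ Finset.range n, ((Fa a)^[j] t)⁻¹) (Ici a) := by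
  induction n with
  | zero => simpa using continuousOn_const
  | succ m ih =>
    have h1 : ContinuousOn (fun t => ((Fa a)^[m] t)⁻¹) (Ici a) :=
      (iter_contOn ha m).inv₀ (fun t ht => (iter_pos ha m ht).ne')
    have := ih.mul h1
    refine this.congr (fun t _ => ?_)
    rw [Finset.prod_range_succ]
    rfl

lemma integral_iter_deriv (n : ℕ) {u : ℝ} (hu : a ≤ u) :
    ∫ t in a..u, (∏ j ∈ Finset.range n, ((Fa a)^[j] t)⁻¹) = (Fa a)^[n] u - a := by
  have hIcc : Set.uIcc a u ⊆ Ici a := by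
    rw [Set.uIcc_of_le hu]; exact fun t ht => ht.1
  rw [intervalIntegral.integral_eq_sub_of_hasDerivAt
    (fun t htt => hasDerivAt_iter ha n (hIcc htt))
    (((iter_deriv_contOn ha n).mono hIcc).intervalIntegrable)]
  rw [iter_fixed]

lemma phi_le (k : ℕ) {u : ℝ} (hu : a ≤ u) :
    phiFun a u ≤ a + a ^ k * ((Fa a)^[k+1] u - a) := by
  have h0 := ha0 ha
  have hptw : ∀ t ∈ Icc a u, 1 / Ftilde a t ≤ a ^ k * ∏ j ∈ Finset.range (k+1), ((Fa a)^[j] t)⁻¹ := by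
    intro t ht
    have hta : a ≤ t := ht.1
    have hprod_pos : 0 < ∏ j ∈ Finset.range (k+1), (Fa a)^[j] t :=
      Finset.prod_pos (fun j _ => iter_pos ha j hta)
    have h1 : (∏ j ∈ Finset.range (k+1), (Fa a)^[j] t) / a ^ k ≤ Ftilde a t := by
      rw [Ftilde_eq ha hta]
      have h2 := prod_le_exp_Sa ha hta (Finset.range (k+1))
      have h3 : ∏ j ∈ Finset.range (k+1), ((Fa a)^[j] t / a)
          = (∏ j ∈ Finset.range (k+1), (Fa a)^[j] t) / a ^ (k+1) := by
        rw [Finset.prod_div_distrib, Finset.prod_const, Finset.card_range]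
      rw [h3] at h2
      calc (∏ j ∈ Finset.range (k+1), (Fa a)^[j] t) / a ^ k
          = a * ((∏ j ∈ Finset.range (k+1), (Fa a)^[j] t) / a ^ (k+1)) := by
            rw [pow_succ]; field_simp
        _ ≤ a * Real.exp (Sa a t) := by gcongr
    have hF_pos : 0 < Ftilde a t := Ftilde_pos ha hta
    rw [div_le_iff₀ hF_pos]
    have h4 : a ^ k * ∏ j ∈ Finset.range (k+1), ((Fa a)^[j] t)⁻¹
        = a ^ k / ∏ j ∈ Finset.range (k+1), (Fa a)^[j] t := by
      rw [div_eq_mul_inv, ← Finset.prod_inv_distrib]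
    rw [h4, div_mul_eq_mul_div, le_div_iff₀ hprod_pos, one_mul]
    calc (∏ j ∈ Finset.range (k+1), (Fa a)^[j] t)
        = ((∏ j ∈ Finset.range (k+1), (Fa a)^[j] t) / a ^ k) * a ^ k := by field_simp
      _ ≤ Ftilde a t * a ^ k := by gcongr
      _ = a ^ k * Ftilde a t := mul_comm _ _
  have hle : (∫ t in a..u, 1 / Ftilde a t)
      ≤ ∫ t in a..u, a ^ k * ∏ j ∈ Finset.range (k+1), ((Fa a)^[j] t)⁻¹ := by
    apply intervalIntegral.integral_mono_on hu (integrand_intble ha le_rfl hu) ?_ hptw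
    have hIcc : Set.uIcc a u ⊆ Ici a := by
      rw [Set.uIcc_of_le hu]; exact fun t ht => ht.1
    exact (((iter_deriv_contOn ha (k+1)).mono hIcc).intervalIntegrable).const_mul _
  have heq : ∫ t in a..u, a ^ k * ∏ j ∈ Finset.range (k+1), ((Fa a)^[j] t)⁻¹
      = a ^ k * ((Fa a)^[k+1] u - a) := by
    rw [intervalIntegral.integral_const_mul, integral_iter_deriv ha (k+1) hu]
  rw [phiFun]
  linarith [hle, heq]

end part5
noncomputable def superLog (a : ℝ) (r : ℝ) : ℝ :=
  if 1 ≤ r then phiFun a (a * r) - a else -(phiFun a (a * (1 / r)) - a)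

noncomputable def A0 (a : ℝ) (k : ℕ) (r : ℝ) : ℝ := (Fa a)^[k] (a * r)

noncomputable def A1 (a : ℝ) (k : ℕ) (r : ℝ) : ℝ := (Fa a)^[k] (phiFun a (a * r))

noncomputable def B0 (a : ℝ) (r : ℝ) : ℝ := Ftilde a (a * r) / (a * r)

/-- For every `k ∈ ℕ` (`k ≥ 1`), as `r → ∞`: `A^0_k(r)/log^k(r) → 1`,
`A^0_k(r)/B^0(r) → 0`, `A^1_0(r)/A^0_k(r) → 0`, and `A^1_k(r)/log^k(A^1_0(r)) → 1`. -/
theorem stmt8 (a : ℝ) (ha : 1 < a) (k : ℕ) (hk : 1 ≤ k) :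
    Filter.Tendsto (fun r : ℝ => A0 a k r / Real.log^[k] r) Filter.atTop (nhds 1) ∧
    Filter.Tendsto (fun r : ℝ => A0 a k r / B0 a r) Filter.atTop (nhds 0) ∧
    Filter.Tendsto (fun r : ℝ => A1 a 0 r / A0 a k r) Filter.atTop (nhds 0) ∧
    Filter.Tendsto (fun r : ℝ => A1 a k r / Real.log^[k] (A1 a 0 r)) Filter.atTop (nhds 1) := by
  have h0 : (0:ℝ) < a := ha0 ha
  have hk1 : 1 ≤ k + 1 := by omega
  -- basic eventual facts
  have hXpos : ∀ r : ℝ, 1 ≤ r → 0 < A0 a k r := fun r hr =>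
    iter_pos ha k (by nlinarith : a ≤ a * r)
  have hYpos : ∀ r : ℝ, 1 ≤ r → 0 < A0 a (k+1) r := fun r hr =>
    iter_pos ha (k+1) (by nlinarith : a ≤ a * r)
  refine ⟨?_, ?_, ?_, ?_⟩
  · simpa [A0] using L1 ha k hk
  · -- A0 k / B0 → 0
    have hg : Tendsto (fun r : ℝ => a^2 / A0 a (k+1) r) atTop (𝓝 0) := by
      simpa [A0] using (tendsto_const_nhds (x := a^2)).div_atTop (L1_atTop ha (k+1) hk1)
    refine tendsto_of_tendsto_of_tendsto_of_le_of_le' tendsto_const_nhds hg ?_ ?_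
    · filter_upwards [eventually_ge_atTop (1:ℝ)] with r hr
      have har : a ≤ a * r := by nlinarith
      have hB : (0:ℝ) < B0 a r :=
        div_pos (Ftilde_pos ha har) (by nlinarith)
      exact div_nonneg (hXpos r hr).le hB.le
    · filter_upwards [eventually_ge_atTop (1:ℝ)] with r hr
      have har : a ≤ a * r := by nlinarith
      have hrpos : (0:ℝ) < r := by linarith
      set X := A0 a k r with hX
      set Y := A0 a (k+1) r with hY
      have hXp := hXpos r hr
      have hYp := hYpos r hr
      have hXa : a ≤ X := iter_ge ha k har
      have hYa : a ≤ Y := iter_ge ha (k+1) har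
      -- lower bound on B0
      have hs : ({0, k, k+1} : Finset ℕ).prod (fun j => (Fa a)^[j] (a*r) / a)
          = r * ((X/a) * (Y/a)) := by
        rw [Finset.prod_insert (by simp; omega), Finset.prod_insert (by simp),
          Finset.prod_singleton]
        simp only [Function.iterate_zero_apply]
        rw [show (Fa a)^[k] (a*r) = X from rfl, show (Fa a)^[k+1] (a*r) = Y from rfl]
        field_simp
        try ring
      have hprod : r * ((X/a) * (Y/a)) ≤ Real.exp (Sa a (a*r)) := by
        rw [← hs]; exact prod_le_exp_Sa ha har _
      have hFt : r * X * Y / a ≤ Ftilde a (a*r) := by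
        rw [Ftilde_eq ha har]
        calc r * X * Y / a = a * (r * ((X/a) * (Y/a))) := by field_simp
          _ ≤ a * Real.exp (Sa a (a*r)) := by gcongr
      have hBge : X * Y / a^2 ≤ B0 a r := by
        rw [B0]
        rw [div_le_div_iff₀ (by positivity) (by positivity)]
        calc X * Y * (a * r) = (r * X * Y / a) * a^2 := by field_simp
          _ ≤ Ftilde a (a*r) * a^2 := by gcongr
      have hBpos : (0:ℝ) < X * Y / a^2 := by positivity
      calc A0 a k r / B0 a r = X / B0 a r := rfl
        _ ≤ X / (X * Y / a^2) := by
            apply div_le_div_of_nonneg_left hXp.le hBpos hBge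
        _ = a^2 / Y := by rw [div_div_eq_mul_div, mul_div_mul_left _ _ hXp.ne']
  · -- phi(ar)/A0 k → 0
    have hphi_ge : ∀ r : ℝ, 1 ≤ r → a ≤ phiFun a (a * r) := by
      intro r hr
      have har : a ≤ a * r := by nlinarith
      have := phi_mono ha le_rfl har
      simpa [phiFun, intervalIntegral.integral_same] using this
    -- RHS function and its limit
    have hR1 : Tendsto (fun r : ℝ => (a - a^(k+1)) / A0 a k r) atTop (𝓝 0) := by
      simpa [A0] using (tendsto_const_nhds (x := a - a^(k+1))).div_atTop (L1_atTop ha k hk)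
    have hQ : Tendsto (fun r : ℝ => A0 a (k+1) r / A0 a k r) atTop (𝓝 0) := by
      have t1 := L1 ha (k+1) hk1
      have hlog0 : Tendsto (fun x : ℝ => Real.log x / x) atTop (𝓝 0) :=
        Real.isLittleO_log_id_atTop.tendsto_div_nhds_zero
      have t2 : Tendsto (fun r : ℝ => Real.log^[k+1] r / Real.log^[k] r) atTop (𝓝 0) := by
        have := hlog0.comp (tendsto_iter_log_atTop k)
        refine this.congr (fun r => ?_)
        simp [Function.comp, Function.iterate_succ_apply' Real.log]
      have t3 : Tendsto (fun r : ℝ => Real.log^[k] r / A0 a k r) atTop (𝓝 1) := by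
        have := (L1 ha k hk).inv₀ one_ne_zero
        simpa [A0, inv_div] using this
      have tall := (t1.mul t2).mul t3
      rw [show (1:ℝ) * 0 * 1 = 0 by ring] at tall
      refine tall.congr' ?_
      filter_upwards [(tendsto_iter_log_atTop k).eventually_gt_atTop 0,
        (tendsto_iter_log_atTop (k+1)).eventually_gt_atTop 0,
        eventually_ge_atTop (1:ℝ)] with r hl hl1 hr
      have h1 : Real.log^[k] r ≠ 0 := hl.ne'
      have h2 : Real.log^[k+1] r ≠ 0 := hl1.ne'
      simp only [A0]
      rw [div_mul_div_cancel₀ h2, div_mul_div_cancel₀ h1]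
    have hR : Tendsto (fun r : ℝ => (a - a^(k+1)) / A0 a k r
        + a^k * (A0 a (k+1) r / A0 a k r)) atTop (𝓝 0) := by
      have := hR1.add ((tendsto_const_nhds (x := a^k)).mul hQ)
      simpa using this
    refine tendsto_of_tendsto_of_tendsto_of_le_of_le' tendsto_const_nhds hR ?_ ?_
    · filter_upwards [eventually_ge_atTop (1:ℝ)] with r hr
      have := hphi_ge r hr
      have hXp := hXpos r hr
      have : 0 ≤ phiFun a (a*r) := by linarith
      simp only [A1, Function.iterate_zero_apply]
      positivity
    · filter_upwards [eventually_ge_atTop (1:ℝ)] with r hr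
      have har : a ≤ a * r := by nlinarith
      have hXp := hXpos r hr
      have hple := phi_le ha k har
      simp only [A1, Function.iterate_zero_apply]
      calc phiFun a (a*r) / A0 a k r ≤ (a + a^k * ((Fa a)^[k+1] (a*r) - a)) / A0 a k r := by
            gcongr
        _ = (a - a^(k+1)) / A0 a k r + a^k * (A0 a (k+1) r / A0 a k r) := by
            simp only [A0]
            ring
  · -- fourth limit
    have hmulat : Tendsto (fun r : ℝ => a * r) atTop atTop :=
      Tendsto.const_mul_atTop h0 tendsto_id
    have hphi : Tendsto (fun r : ℝ => phiFun a (a * r)) atTop atTop :=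
      (phi_tendsto ha).comp hmulat
    have := (L2 ha k hk).comp hphi
    refine this.congr (fun r => ?_)
    simp [A1, Function.comp]
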